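/- Let M be a finitely generated flat module over a commutative ring R and J an ideal of R. Then Ann_R(M/JM) = Ann_R(M) + J. -/

import Mathlib

open TensorProduct

/-- For a flat module, `IM ⊓ JM ≤ (I ⊓ J)M`. -/
lemma flat_inf_smul_top (R M : Type*) [CommRing R] [AddCommGroup M] [Module R M]
    [Module.Flat R M] (I J : Ideal R) :
    (I • ⊤ : Submodule R M) ⊓ (J • ⊤ : Submodule R M) ≤ (I ⊓ J) • ⊤ := by
  intro x hx
  obtain ⟨hxI, hxJ⟩ := hx
  set K : Ideal R := I ⊓ J with hK
  set f : R →ₗ[R] (R ⧸ I) × (R ⧸ J) :=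
    LinearMap.prod (Submodule.mkQ I) (Submodule.mkQ J) with hf
  have hexact0 : Function.Exact (K.subtype) f := by
    rw [LinearMap.exact_iff]
    rw [hf, LinearMap.ker_prod, Submodule.ker_mkQ, Submodule.ker_mkQ,
      Submodule.range_subtype]
  have hexact : Function.Exact (K.subtype.lTensor M) (f.lTensor M) :=
    Module.Flat.lTensor_exact M hexact0
  have hzero : (f.lTensor M) (x ⊗ₜ (1 : R)) = 0 := by
    have h1 : (x ⊗ₜ[R] ((Submodule.mkQ I) (1:R))) = (0 : M ⊗[R] (R ⧸ I)) := by
      apply (TensorProduct.tensorQuotEquivQuotSMul M I).injective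
      rw [map_zero]
      show (TensorProduct.tensorQuotEquivQuotSMul M I)
        (x ⊗ₜ[R] (Ideal.Quotient.mk I (1:R))) = 0
      rw [TensorProduct.tensorQuotEquivQuotSMul_tmul_mk, one_smul,
        Submodule.Quotient.mk_eq_zero]
      exact hxI
    have h2 : (x ⊗ₜ[R] ((Submodule.mkQ J) (1:R))) = (0 : M ⊗[R] (R ⧸ J)) := by
      apply (TensorProduct.tensorQuotEquivQuotSMul M J).injective
      rw [map_zero]
      show (TensorProduct.tensorQuotEquivQuotSMul M J)
        (x ⊗ₜ[R] (Ideal.Quotient.mk J (1:R))) = 0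
      rw [TensorProduct.tensorQuotEquivQuotSMul_tmul_mk, one_smul,
        Submodule.Quotient.mk_eq_zero]
      exact hxJ
    apply (TensorProduct.prodRight R R M (R ⧸ I) (R ⧸ J)).injective
    rw [map_zero]
    rw [LinearMap.lTensor_tmul]
    simp only [hf, LinearMap.prod_apply, Function.prod]
    rw [TensorProduct.prodRight_tmul, h1, h2]
    rfl
  obtain ⟨y, hy⟩ := hexact (x ⊗ₜ (1 : R)) |>.mp hzero
  have key : ∀ z : M ⊗[R] K,
      (TensorProduct.rid R M) (K.subtype.lTensor M z) ∈ (K • ⊤ : Submodule R M) := by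
    intro z
    induction z using TensorProduct.induction_on with
    | zero => simp
    | tmul m a =>
        rw [LinearMap.lTensor_tmul, Submodule.subtype_apply, TensorProduct.rid_tmul]
        exact Submodule.smul_mem_smul a.2 trivial
    | add a b ha hb =>
        rw [map_add, map_add]
        exact Submodule.add_mem _ ha hb
  have := key y
  rw [hy, TensorProduct.rid_tmul, one_smul] at this
  exact this

/-- For a finitely generated flat module `M` and any ideal `J`,
`Ann(M/JM) = Ann(M) + J`. -/
theorem annihilator_quotient_smul_eq
    (R M : Type*) [CommRing R] [AddCommGroup M] [Module R M]
    [Module.Finite R M] [Module.Flat R M] (J : Ideal R) :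
    Module.annihilator R (M ⧸ (J • ⊤ : Submodule R M)) =
      Module.annihilator R M ⊔ J := by
  apply le_antisymm
  · -- hard direction
    intro r hr
    rw [Module.mem_annihilator] at hr
    have hrM : ∀ m : M, r • m ∈ (J • ⊤ : Submodule R M) := by
      intro m
      rw [← Submodule.Quotient.mk_eq_zero (J • ⊤ : Submodule R M),
        Submodule.Quotient.mk_smul]
      exact hr _
    set K : Ideal R := Submodule.comap (LinearMap.lsmul R R r) J with hK
    set N : Submodule R M := Submodule.map (LinearMap.lsmul R M r) ⊤ with hN
    have hNfg : N.FG := (Module.finite_def.mp ‹Module.Finite R M›).map _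
    have hle : N ≤ K • N := by
      rintro _ ⟨m, -, rfl⟩
      have h1 : (LinearMap.lsmul R M r) m ∈ (Ideal.span {r} • ⊤ : Submodule R M) :=
        Submodule.smul_mem_smul (Ideal.subset_span rfl) trivial
      have h2 : (LinearMap.lsmul R M r) m ∈ ((Ideal.span {r} ⊓ J) • ⊤ : Submodule R M) :=
        flat_inf_smul_top R M (Ideal.span {r}) J ⟨h1, hrM m⟩
      refine Submodule.smul_le.mpr ?_ h2
      rintro a ⟨haR, haJ⟩ m' -
      obtain ⟨c, rfl⟩ := Ideal.mem_span_singleton'.mp haR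
      have hcK : c ∈ K := by
        simpa [hK, mul_comm] using haJ
      have : (c * r) • m' = c • (r • m') := by rw [mul_smul]
      rw [this]
      exact Submodule.smul_mem_smul hcK ⟨m', trivial, rfl⟩
    obtain ⟨s, hs1, hs0⟩ :=
      Submodule.exists_sub_one_mem_and_smul_eq_zero_of_fg_of_le_smul K N hNfg hle
    have hann : s * r ∈ Module.annihilator R M := by
      rw [Module.mem_annihilator]
      intro m
      rw [mul_smul]
      exact hs0 _ ⟨m, trivial, rfl⟩
    have hJ : (1 - s) * r ∈ J := by
      have : r * (s - 1) ∈ J := hs1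
      have h' : -(r * (s - 1)) ∈ J := J.neg_mem this
      convert h' using 1
      ring
    exact Submodule.mem_sup.mpr ⟨s * r, hann, (1 - s) * r, hJ, by ring⟩
  · apply sup_le
    · intro a ha
      rw [Module.mem_annihilator] at ha ⊢
      intro q
      obtain ⟨m, rfl⟩ := Submodule.Quotient.mk_surjective _ q
      rw [← Submodule.Quotient.mk_smul, ha, Submodule.Quotient.mk_zero]
    · intro a ha
      rw [Module.mem_annihilator]
      intro q
      obtain ⟨m, rfl⟩ := Submodule.Quotient.mk_surjective _ q
      rw [← Submodule.Quotient.mk_smul, Submodule.Quotient.mk_eq_zero]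
      exact Submodule.smul_mem_smul ha trivial
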